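/- arXiv:1512.08063 — 2 statements merged into one kernel-verified Lean document; each statement's English description precedes it below -/
import Mathlib

section
/- For every τ in the upper half-plane and all z, w ∈ ℂ, the level-three theta functions satisfy the three addition formulae: θ₀²·θ₀(z+w)·θ₂(z−w) = θ₀(z)θ₂(z)θ₁(w)² − θ₁(z)²θ₀(w)θ₂(w); θ₀²·θ₁(z+w)·θ₂(z−w) = θ₁(z)θ₂(z)θ₀(w)² − θ₀(z)²θ₁(w)θ₂(w); θ₀²·θ₂(z+w)·θ₂(z−w) = θ₀(z)θ₁(z)θ₂(w)² − θ₂(z)²θ₀(w)θ₁(w). -/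
open Complex

/-- The level-three theta function `θ_k(z,τ)`. -/
noncomputable def theta (k : ℤ) (z τ : ℂ) : ℂ :=
  ∑' n : ℤ, Complex.exp (3 * Real.pi * Complex.I * ((n : ℂ) + (k : ℂ) / 3 - 1 / 6) ^ 2 * τ) *
    Complex.exp (6 * Real.pi * Complex.I * ((n : ℂ) + (k : ℂ) / 3 - 1 / 6) * (z + 1 / 2))

/-! ### Auxiliary definitions -/

/-- Term of a theta series with real characteristic `a`. -/
noncomputable def tT (τ a x : ℂ) (n : ℤ) : ℂ :=
  Complex.exp (3 * Real.pi * Complex.I * ((n : ℂ) + a) ^ 2 * τ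
    + 6 * Real.pi * Complex.I * ((n : ℂ) + a) * (x + 1 / 2))

/-- Term of the auxiliary (level doubled) theta series. -/
noncomputable def AT (τ α x : ℂ) (n : ℤ) : ℂ :=
  Complex.exp (6 * Real.pi * Complex.I * ((n : ℂ) + α) ^ 2 * τ
    + 6 * Real.pi * Complex.I * ((n : ℂ) + α) * x)

/-- The auxiliary theta series. -/
noncomputable def AS (τ α x : ℂ) : ℂ := ∑' n : ℤ, AT τ α x n

lemma theta_eq (k : ℤ) (z τ : ℂ) : theta k z τ = ∑' n : ℤ, tT τ ((k : ℂ) / 3 - 1 / 6) z n := by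
  unfold theta tT
  refine tsum_congr fun n => ?_
  rw [← Complex.exp_add]
  congr 1
  ring

lemma tT_eq_jt (τ a x : ℂ) (n : ℤ) :
    tT τ a x n = Complex.exp (3 * Real.pi * Complex.I * a ^ 2 * τ
        + 6 * Real.pi * Complex.I * a * (x + 1 / 2)) *
      jacobiTheta₂_term n (3 * a * τ + 3 * x + 3 / 2) (3 * τ) := by
  unfold tT jacobiTheta₂_term
  rw [← Complex.exp_add]
  congr 1
  ring

lemma summable_norm_jt {z τ : ℂ} (hτ : 0 < τ.im) :
    Summable fun n : ℤ => ‖jacobiTheta₂_term n z τ‖ := by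
  refine ((summable_pow_mul_jacobiTheta₂_term_bound |z.im| hτ 0).of_nonneg_of_le
    (fun n => norm_nonneg _) fun n => ?_)
  simpa only [pow_zero, one_mul] using norm_jacobiTheta₂_term_le hτ le_rfl le_rfl n

lemma summable_norm_tT {τ : ℂ} (hτ : 0 < τ.im) (a x : ℂ) :
    Summable fun n : ℤ => ‖tT τ a x n‖ := by
  have h3 : 0 < (3 * τ).im := by simp only [Complex.mul_im]; norm_num [hτ]
  simp only [tT_eq_jt, norm_mul]
  exact (summable_norm_jt h3).mul_left _

lemma AT_eq_tT (τ α x : ℂ) (n : ℤ) : AT τ α x n = tT (2 * τ) α (x - 1 / 2) n := by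
  unfold AT tT
  congr 1
  ring

lemma summable_norm_AT {τ : ℂ} (hτ : 0 < τ.im) (α x : ℂ) :
    Summable fun n : ℤ => ‖AT τ α x n‖ := by
  have h2 : 0 < (2 * τ).im := by simp only [Complex.mul_im]; norm_num [hτ]
  simp only [AT_eq_tT]
  exact summable_norm_tT h2 α (x - 1 / 2)

/-- The even-parity index equivalence. -/
def evenEquiv : (ℤ × ℤ) ≃ {p : ℤ × ℤ // p ∈ {q : ℤ × ℤ | (q.1 + q.2) % 2 = 0}} where
  toFun p := ⟨(p.1 + p.2, p.1 - p.2), by simp only [Set.mem_setOf_eq]; omega⟩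
  invFun q := ((q.1.1 + q.1.2) / 2, (q.1.1 - q.1.2) / 2)
  left_inv p := by
    obtain ⟨m, n⟩ := p
    simp only [Prod.mk.injEq]
    omega
  right_inv q := by
    obtain ⟨⟨m, n⟩, hq⟩ := q
    simp only [Set.mem_setOf_eq] at hq
    ext <;> simp only [] <;> omega

/-- The odd-parity index equivalence. -/
def oddEquiv : (ℤ × ℤ) ≃ {p : ℤ × ℤ // p ∈ ({q : ℤ × ℤ | (q.1 + q.2) % 2 = 0} : Set (ℤ × ℤ))ᶜ} where
  toFun p := ⟨(p.1 + p.2 + 1, p.1 - p.2), by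
    simp only [Set.mem_compl_iff, Set.mem_setOf_eq]; omega⟩
  invFun q := ((q.1.1 + q.1.2 - 1) / 2, (q.1.1 - q.1.2 - 1) / 2)
  left_inv p := by
    obtain ⟨m, n⟩ := p
    simp only [Prod.mk.injEq]
    omega
  right_inv q := by
    obtain ⟨⟨m, n⟩, hq⟩ := q
    simp only [Set.mem_compl_iff, Set.mem_setOf_eq] at hq
    ext <;> simp only [] <;> omega

lemma term_even (τ a b ζ η : ℂ) (j k : ℤ) :
    tT τ a (ζ + η) (j + k) * tT τ b (ζ - η) (j - k)
      = AT τ ((a + b) / 2) (2 * ζ + 1) j * AT τ ((a - b) / 2) (2 * η) k := by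
  unfold tT AT
  rw [← Complex.exp_add, ← Complex.exp_add]
  congr 1
  push_cast
  ring

lemma term_odd (τ a b ζ η : ℂ) (j k : ℤ) :
    tT τ a (ζ + η) (j + k + 1) * tT τ b (ζ - η) (j - k)
      = AT τ ((a + b + 1) / 2) (2 * ζ + 1) j * AT τ ((a - b + 1) / 2) (2 * η) k := by
  unfold tT AT
  rw [← Complex.exp_add, ← Complex.exp_add]
  congr 1
  push_cast
  ring

/-- The key product formula: a product of two level-three theta series decomposes as a
sum of two products of the auxiliary series. -/
lemma key {τ : ℂ} (hτ : 0 < τ.im) (a b ζ η : ℂ) :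
    (∑' n : ℤ, tT τ a (ζ + η) n) * (∑' n : ℤ, tT τ b (ζ - η) n)
      = AS τ ((a + b) / 2) (2 * ζ + 1) * AS τ ((a - b) / 2) (2 * η)
        + AS τ ((a + b + 1) / 2) (2 * ζ + 1) * AS τ ((a - b + 1) / 2) (2 * η) := by
  have h1 := summable_norm_tT hτ a (ζ + η)
  have h2 := summable_norm_tT hτ b (ζ - η)
  rw [tsum_mul_tsum_of_summable_norm h1 h2]
  have hf : Summable fun p : ℤ × ℤ => tT τ a (ζ + η) p.1 * tT τ b (ζ - η) p.2 :=
    summable_mul_of_summable_norm h1 h2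
  rw [← Summable.tsum_subtype_add_tsum_subtype_compl hf {q : ℤ × ℤ | (q.1 + q.2) % 2 = 0}]
  unfold AS
  rw [tsum_mul_tsum_of_summable_norm (summable_norm_AT hτ _ _) (summable_norm_AT hτ _ _),
    tsum_mul_tsum_of_summable_norm (summable_norm_AT hτ _ _) (summable_norm_AT hτ _ _)]
  congr 1
  · rw [← Equiv.tsum_eq evenEquiv]
    refine tsum_congr fun p => ?_
    obtain ⟨j, k⟩ := p
    exact term_even τ a b ζ η j k
  · rw [← Equiv.tsum_eq oddEquiv]
    refine tsum_congr fun p => ?_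
    obtain ⟨j, k⟩ := p
    exact term_odd τ a b ζ η j k

/-- Version of `key` with the characteristics of the right-hand side given explicitly. -/
lemma key' {τ : ℂ} (hτ : 0 < τ.im) {a b α₁ α₂ α₃ α₄ : ℂ} (ζ η : ℂ)
    (h₁ : a + b = 2 * α₁) (h₂ : a - b = 2 * α₂) (h₃ : a + b + 1 = 2 * α₃)
    (h₄ : a - b + 1 = 2 * α₄) :
    (∑' n : ℤ, tT τ a (ζ + η) n) * (∑' n : ℤ, tT τ b (ζ - η) n)
      = AS τ α₁ (2 * ζ + 1) * AS τ α₂ (2 * η) + AS τ α₃ (2 * ζ + 1) * AS τ α₄ (2 * η) := by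
  have e₁ : (a + b) / 2 = α₁ := by linear_combination h₁ / 2
  have e₂ : (a - b) / 2 = α₂ := by linear_combination h₂ / 2
  have e₃ : (a + b + 1) / 2 = α₃ := by linear_combination h₃ / 2
  have e₄ : (a - b + 1) / 2 = α₄ := by linear_combination h₄ / 2
  rw [key hτ a b ζ η, e₁, e₂, e₃, e₄]

lemma AS_add_one (τ α x : ℂ) :
    AS τ α (x + 1) = Complex.exp (6 * Real.pi * Complex.I * α) * AS τ α x := by
  unfold AS
  rw [← tsum_mul_left]
  refine tsum_congr fun n => ?_
  unfold AT
  rw [← Complex.exp_add]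
  have : (6 * (Real.pi : ℂ) * Complex.I * ((n : ℂ) + α) ^ 2 * τ
      + 6 * Real.pi * Complex.I * ((n : ℂ) + α) * (x + 1))
      = (6 * Real.pi * Complex.I * α + (6 * Real.pi * Complex.I * ((n : ℂ) + α) ^ 2 * τ
      + 6 * Real.pi * Complex.I * ((n : ℂ) + α) * x)) + ((3 * n : ℤ) : ℂ) * (2 * Real.pi * Complex.I) := by
    push_cast
    ring
  rw [this, Complex.exp_add, Complex.exp_int_mul_two_pi_mul_I, mul_one]

lemma AS_char_add_one (τ α x : ℂ) : AS τ (α + 1) x = AS τ α x := by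
  unfold AS
  rw [← Equiv.tsum_eq (Equiv.addRight (1 : ℤ)) (AT τ α x)]
  refine tsum_congr fun n => ?_
  unfold AT
  simp only [Equiv.coe_addRight]
  congr 2 <;> push_cast <;> ring

lemma AS_char_neg (τ α : ℂ) : AS τ (-α) 0 = AS τ α 0 := by
  unfold AS
  rw [← Equiv.tsum_eq (Equiv.neg ℤ) (AT τ α 0)]
  refine tsum_congr fun n => ?_
  unfold AT
  simp only [Equiv.neg_apply]
  congr 1
  push_cast
  ring

lemma key3 {τ : ℂ} (hτ : 0 < τ.im) {a b α₁ α₂ α₃ α₄ : ℂ} (ζ η x₁ x₂ y₁ y₂ : ℂ)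
    (hx₁ : x₁ = ζ + η) (hx₂ : x₂ = ζ - η) (hy₁ : y₁ = 2 * ζ + 1) (hy₂ : y₂ = 2 * η)
    (h₁ : a + b = 2 * α₁) (h₂ : a - b = 2 * α₂)
    (h₃ : a + b + 1 = 2 * α₃) (h₄ : a - b + 1 = 2 * α₄) :
    (∑' n : ℤ, tT τ a x₁ n) * (∑' n : ℤ, tT τ b x₂ n)
      = AS τ α₁ y₁ * AS τ α₂ y₂ + AS τ α₃ y₁ * AS τ α₄ y₂ := by
  subst hx₁ hx₂ hy₁ hy₂
  exact key' hτ ζ η h₁ h₂ h₃ h₄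

lemma AS_twothirds (τ x : ℂ) : AS τ (2/3) x = AS τ (-(1/3)) x := by
  rw [show (2/3 : ℂ) = -(1/3) + 1 by norm_num, AS_char_add_one]

lemma AS_fivesixths (τ x : ℂ) : AS τ (5/6) x = AS τ (-(1/6)) x := by
  rw [show (5/6 : ℂ) = -(1/6) + 1 by norm_num, AS_char_add_one]

lemma AS_onechar (τ x : ℂ) : AS τ (1 : ℂ) x = AS τ 0 x := by
  rw [show (1 : ℂ) = 0 + 1 by norm_num, AS_char_add_one]

lemma exp_char_even (α : ℂ) (m : ℤ) (h : 3 * α = (m : ℂ)) :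
    Complex.exp (6 * Real.pi * Complex.I * α) = 1 := by
  have h' : (6 : ℂ) * Real.pi * Complex.I * α = (m : ℂ) * (2 * Real.pi * Complex.I) := by
    linear_combination (2 * (Real.pi : ℂ) * Complex.I) * h
  rw [h', Complex.exp_int_mul_two_pi_mul_I]

lemma exp_char_odd (α : ℂ) (m : ℤ) (h : 6 * α = 2 * (m : ℂ) + 1) :
    Complex.exp (6 * Real.pi * Complex.I * α) = -1 := by
  have h' : (6 : ℂ) * Real.pi * Complex.I * α
      = Real.pi * Complex.I + (m : ℂ) * (2 * Real.pi * Complex.I) := by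
    linear_combination ((Real.pi : ℂ) * Complex.I) * h
  rw [h', Complex.exp_add, Complex.exp_pi_mul_I, Complex.exp_int_mul_two_pi_mul_I, mul_one]

lemma exq0 : Complex.exp (6 * Real.pi * Complex.I * (0 : ℂ)) = 1 :=
  exp_char_even 0 0 (by norm_num)

lemma exq1 : Complex.exp (6 * Real.pi * Complex.I * (1 : ℂ)) = 1 :=
  exp_char_even 1 3 (by push_cast; norm_num)

lemma exq1' : Complex.exp (6 * Real.pi * Complex.I) = 1 := by
  have := exq1
  rwa [mul_one] at this

lemma exq13 : Complex.exp (6 * Real.pi * Complex.I * (1/3 : ℂ)) = 1 :=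
  exp_char_even (1/3) 1 (by push_cast; norm_num)

lemma exqm13 : Complex.exp (6 * Real.pi * Complex.I * (-(1/3) : ℂ)) = 1 :=
  exp_char_even (-(1/3)) (-1) (by push_cast; norm_num)

lemma exq23 : Complex.exp (6 * Real.pi * Complex.I * (2/3 : ℂ)) = 1 :=
  exp_char_even (2/3) 2 (by push_cast; norm_num)

lemma exq16 : Complex.exp (6 * Real.pi * Complex.I * (1/6 : ℂ)) = -1 :=
  exp_char_odd (1/6) 0 (by push_cast; norm_num)

lemma exqm16 : Complex.exp (6 * Real.pi * Complex.I * (-(1/6) : ℂ)) = -1 :=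
  exp_char_odd (-(1/6)) (-1) (by push_cast; norm_num)

lemma exq12 : Complex.exp (6 * Real.pi * Complex.I * (1/2 : ℂ)) = -1 :=
  exp_char_odd (1/2) 1 (by push_cast; norm_num)

lemma exq56 : Complex.exp (6 * Real.pi * Complex.I * (5/6 : ℂ)) = -1 :=
  exp_char_odd (5/6) 2 (by push_cast; norm_num)

theorem addition_formulae_third_triple (τ : ℂ) (hτ : 0 < τ.im) (z w : ℂ) :
    (theta 0 0 τ) ^ 2 * theta 0 (z + w) τ * theta 2 (z - w) τ =
      theta 0 z τ * theta 2 z τ * (theta 1 w τ) ^ 2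
        - (theta 1 z τ) ^ 2 * theta 0 w τ * theta 2 w τ ∧
    (theta 0 0 τ) ^ 2 * theta 1 (z + w) τ * theta 2 (z - w) τ =
      theta 1 z τ * theta 2 z τ * (theta 0 w τ) ^ 2
        - (theta 0 z τ) ^ 2 * theta 1 w τ * theta 2 w τ ∧
    (theta 0 0 τ) ^ 2 * theta 2 (z + w) τ * theta 2 (z - w) τ =
      theta 0 z τ * theta 1 z τ * (theta 2 w τ) ^ 2
        - (theta 2 z τ) ^ 2 * theta 0 w τ * theta 1 w τ := by
  -- the square of the theta constant
  have h16 : theta 0 0 τ * theta 0 0 τ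
      = AS τ (-(1/6)) (0 + 1) * AS τ 0 0 + AS τ (1/3) (0 + 1) * AS τ (1/2) 0 := by
    simp only [theta_eq]
    exact key3 hτ 0 0 0 0 (0 + 1) 0 (by ring) (by ring) (by norm_num) (by norm_num)
      (by push_cast; norm_num) (by push_cast; norm_num) (by push_cast; norm_num)
      (by push_cast; norm_num)
  -- the three mixed products
  have h1 : theta 0 (z + w) τ * theta 2 (z - w) τ
      = AS τ (1/6) (2 * z + 1) * AS τ (-(1/3)) (2 * w)
        + AS τ (2/3) (2 * z + 1) * AS τ (1/6) (2 * w) := by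
    simp only [theta_eq]
    exact key3 hτ z w (z + w) (z - w) (2 * z + 1) (2 * w) rfl rfl rfl rfl
      (by push_cast; norm_num) (by push_cast; norm_num) (by push_cast; norm_num)
      (by push_cast; norm_num)
  have h2 : theta 1 (z + w) τ * theta 2 (z - w) τ
      = AS τ (1/3) (2 * z + 1) * AS τ (-(1/6)) (2 * w)
        + AS τ (5/6) (2 * z + 1) * AS τ (1/3) (2 * w) := by
    simp only [theta_eq]
    exact key3 hτ z w (z + w) (z - w) (2 * z + 1) (2 * w) rfl rfl rfl rfl
      (by push_cast; norm_num) (by push_cast; norm_num) (by push_cast; norm_num)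
      (by push_cast; norm_num)
  have h3 : theta 2 (z + w) τ * theta 2 (z - w) τ
      = AS τ (1/2) (2 * z + 1) * AS τ 0 (2 * w)
        + AS τ (1 : ℂ) (2 * z + 1) * AS τ (1/2) (2 * w) := by
    simp only [theta_eq]
    exact key3 hτ z w (z + w) (z - w) (2 * z + 1) (2 * w) rfl rfl rfl rfl
      (by push_cast; norm_num) (by push_cast; norm_num) (by push_cast; norm_num)
      (by push_cast; norm_num)
  -- the six products at z
  have h4 : theta 0 z τ * theta 2 z τ
      = AS τ (1/6) (2 * z + 1) * AS τ (-(1/3)) 0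
        + AS τ (2/3) (2 * z + 1) * AS τ (1/6) 0 := by
    simp only [theta_eq]
    exact key3 hτ z 0 z z (2 * z + 1) 0 (by ring) (by ring) rfl (by norm_num)
      (by push_cast; norm_num) (by push_cast; norm_num) (by push_cast; norm_num)
      (by push_cast; norm_num)
  have h5 : theta 1 z τ * theta 2 z τ
      = AS τ (1/3) (2 * z + 1) * AS τ (-(1/6)) 0
        + AS τ (5/6) (2 * z + 1) * AS τ (1/3) 0 := by
    simp only [theta_eq]
    exact key3 hτ z 0 z z (2 * z + 1) 0 (by ring) (by ring) rfl (by norm_num)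
      (by push_cast; norm_num) (by push_cast; norm_num) (by push_cast; norm_num)
      (by push_cast; norm_num)
  have h6 : theta 0 z τ * theta 1 z τ
      = AS τ 0 (2 * z + 1) * AS τ (-(1/6)) 0
        + AS τ (1/2) (2 * z + 1) * AS τ (1/3) 0 := by
    simp only [theta_eq]
    exact key3 hτ z 0 z z (2 * z + 1) 0 (by ring) (by ring) rfl (by norm_num)
      (by push_cast; norm_num) (by push_cast; norm_num) (by push_cast; norm_num)
      (by push_cast; norm_num)
  have h7 : theta 0 z τ * theta 0 z τ
      = AS τ (-(1/6)) (2 * z + 1) * AS τ 0 0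
        + AS τ (1/3) (2 * z + 1) * AS τ (1/2) 0 := by
    simp only [theta_eq]
    exact key3 hτ z 0 z z (2 * z + 1) 0 (by ring) (by ring) rfl (by norm_num)
      (by push_cast; norm_num) (by push_cast; norm_num) (by push_cast; norm_num)
      (by push_cast; norm_num)
  have h8 : theta 1 z τ * theta 1 z τ
      = AS τ (1/6) (2 * z + 1) * AS τ 0 0
        + AS τ (2/3) (2 * z + 1) * AS τ (1/2) 0 := by
    simp only [theta_eq]
    exact key3 hτ z 0 z z (2 * z + 1) 0 (by ring) (by ring) rfl (by norm_num)
      (by push_cast; norm_num) (by push_cast; norm_num) (by push_cast; norm_num)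
      (by push_cast; norm_num)
  have h9 : theta 2 z τ * theta 2 z τ
      = AS τ (1/2) (2 * z + 1) * AS τ 0 0
        + AS τ (1 : ℂ) (2 * z + 1) * AS τ (1/2) 0 := by
    simp only [theta_eq]
    exact key3 hτ z 0 z z (2 * z + 1) 0 (by ring) (by ring) rfl (by norm_num)
      (by push_cast; norm_num) (by push_cast; norm_num) (by push_cast; norm_num)
      (by push_cast; norm_num)
  -- the six products at w
  have h10 : theta 1 w τ * theta 1 w τ
      = AS τ (1/6) (2 * w + 1) * AS τ 0 0
        + AS τ (2/3) (2 * w + 1) * AS τ (1/2) 0 := by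
    simp only [theta_eq]
    exact key3 hτ w 0 w w (2 * w + 1) 0 (by ring) (by ring) rfl (by norm_num)
      (by push_cast; norm_num) (by push_cast; norm_num) (by push_cast; norm_num)
      (by push_cast; norm_num)
  have h11 : theta 0 w τ * theta 2 w τ
      = AS τ (1/6) (2 * w + 1) * AS τ (-(1/3)) 0
        + AS τ (2/3) (2 * w + 1) * AS τ (1/6) 0 := by
    simp only [theta_eq]
    exact key3 hτ w 0 w w (2 * w + 1) 0 (by ring) (by ring) rfl (by norm_num)
      (by push_cast; norm_num) (by push_cast; norm_num) (by push_cast; norm_num)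
      (by push_cast; norm_num)
  have h12 : theta 0 w τ * theta 0 w τ
      = AS τ (-(1/6)) (2 * w + 1) * AS τ 0 0
        + AS τ (1/3) (2 * w + 1) * AS τ (1/2) 0 := by
    simp only [theta_eq]
    exact key3 hτ w 0 w w (2 * w + 1) 0 (by ring) (by ring) rfl (by norm_num)
      (by push_cast; norm_num) (by push_cast; norm_num) (by push_cast; norm_num)
      (by push_cast; norm_num)
  have h13 : theta 1 w τ * theta 2 w τ
      = AS τ (1/3) (2 * w + 1) * AS τ (-(1/6)) 0
        + AS τ (5/6) (2 * w + 1) * AS τ (1/3) 0 := by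
    simp only [theta_eq]
    exact key3 hτ w 0 w w (2 * w + 1) 0 (by ring) (by ring) rfl (by norm_num)
      (by push_cast; norm_num) (by push_cast; norm_num) (by push_cast; norm_num)
      (by push_cast; norm_num)
  have h14 : theta 2 w τ * theta 2 w τ
      = AS τ (1/2) (2 * w + 1) * AS τ 0 0
        + AS τ (1 : ℂ) (2 * w + 1) * AS τ (1/2) 0 := by
    simp only [theta_eq]
    exact key3 hτ w 0 w w (2 * w + 1) 0 (by ring) (by ring) rfl (by norm_num)
      (by push_cast; norm_num) (by push_cast; norm_num) (by push_cast; norm_num)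
      (by push_cast; norm_num)
  have h15 : theta 0 w τ * theta 1 w τ
      = AS τ 0 (2 * w + 1) * AS τ (-(1/6)) 0
        + AS τ (1/2) (2 * w + 1) * AS τ (1/3) 0 := by
    simp only [theta_eq]
    exact key3 hτ w 0 w w (2 * w + 1) 0 (by ring) (by ring) rfl (by norm_num)
      (by push_cast; norm_num) (by push_cast; norm_num) (by push_cast; norm_num)
      (by push_cast; norm_num)
  -- normalise all the auxiliary series to the canonical atoms
  simp only [AS_add_one, AS_twothirds, AS_fivesixths, AS_onechar, AS_char_neg,
    exq0, exq1, exq1', exq13, exqm13, exq23, exq16, exqm16, exq12, exq56,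
    one_mul, neg_mul, mul_one] at h16 h1 h2 h3 h4 h5 h6 h7 h8 h9 h10 h11 h12 h13 h14 h15
  refine ⟨?_, ?_, ?_⟩
  · linear_combination (theta 0 (z + w) τ * theta 2 (z - w) τ) * h16
      + (-(AS τ (1/6) 0 * AS τ 0 0) + AS τ (1/3) 0 * AS τ (1/2) 0) * h1
      - (theta 1 w τ) ^ 2 * h4
      - (-(AS τ (1/6) (2 * z) * AS τ (1/3) 0) + AS τ (-(1/3)) (2 * z) * AS τ (1/6) 0) * h10
      + (theta 0 w τ * theta 2 w τ) * h8
      + (-(AS τ (1/6) (2 * z) * AS τ 0 0) + AS τ (-(1/3)) (2 * z) * AS τ (1/2) 0) * h11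
  · linear_combination (theta 1 (z + w) τ * theta 2 (z - w) τ) * h16
      + (-(AS τ (1/6) 0 * AS τ 0 0) + AS τ (1/3) 0 * AS τ (1/2) 0) * h2
      - (theta 0 w τ) ^ 2 * h5
      - (AS τ (1/3) (2 * z) * AS τ (1/6) 0 - AS τ (-(1/6)) (2 * z) * AS τ (1/3) 0) * h12
      + (theta 1 w τ * theta 2 w τ) * h7
      + (-(AS τ (-(1/6)) (2 * z) * AS τ 0 0) + AS τ (1/3) (2 * z) * AS τ (1/2) 0) * h13
  · linear_combination (theta 2 (z + w) τ * theta 2 (z - w) τ) * h16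
      + (-(AS τ (1/6) 0 * AS τ 0 0) + AS τ (1/3) 0 * AS τ (1/2) 0) * h3
      - (theta 2 w τ) ^ 2 * h6
      - (AS τ 0 (2 * z) * AS τ (1/6) 0 - AS τ (1/2) (2 * z) * AS τ (1/3) 0) * h14
      + (theta 0 w τ * theta 1 w τ) * h9
      + (-(AS τ (1/2) (2 * z) * AS τ 0 0) + AS τ 0 (2 * z) * AS τ (1/2) 0) * h15
end

section
/- Let K > 0 and δ ∈ (0, 1/6), and set R_δ := ⋃_{j=1}^{3} [(j−1)/3 + δ, j/3 − δ]. As ε → 0⁺, the functions a ↦ ε·log|θ₀(−aτ_ε, τ_ε)/θ₂(−aτ_ε, τ_ε)| and a ↦ ε·log|θ₁(−aτ_ε, τ_ε)/θ₂(−aτ_ε, τ_ε)| (which are well defined on R_δ for ε small, since all θ_k(−aτ_ε, τ_ε) ≠ 0 there) converge uniformly on R_δ to a ↦ c̃(3Ka) and a ↦ s̃(3Ka), respectively. -/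
open Complex

/-- The parameter `τ_ε = −3K/(9K + 2πiε)`. -/
noncomputable def tauE (K ε : ℝ) : ℂ :=
  -3 * K / (9 * K + 2 * Real.pi * Complex.I * ε)

/-- The ultradiscrete elliptic function `c̃`. -/
noncomputable def ctilde (K u : ℝ) : ℝ :=
  -(9 * K / 2) * (Int.fract ((u - K) / (3 * K)) - 1 / 2) ^ 2
    + (9 * K / 2) * (Int.fract (u / (3 * K)) - 1 / 2) ^ 2

/-- The ultradiscrete elliptic function `s̃`. -/
noncomputable def stilde (K u : ℝ) : ℝ :=
  -(9 * K / 2) * (Int.fract ((u - 2 * K) / (3 * K)) - 1 / 2) ^ 2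
    + (9 * K / 2) * (Int.fract (u / (3 * K)) - 1 / 2) ^ 2

/-- The compact set `R_δ = ⋃_{j=1}^{3} [(j−1)/3 + δ, j/3 − δ]`. -/
def Rdelta (δ : ℝ) : Set ℝ :=
  Set.Icc δ (1 / 3 - δ) ∪ Set.Icc (1 / 3 + δ) (2 / 3 - δ) ∪ Set.Icc (2 / 3 + δ) (1 - δ)

noncomputable def xi (K ε : ℝ) : ℝ := 2 * Real.pi * ε / (9 * K)

noncomputable def gsum (ξ : ℝ) (z : ℂ) : ℂ :=
  ∑' n : ℤ, Complex.exp (-(Real.pi : ℂ) * (z - (n : ℂ)) ^ 2 / (ξ : ℂ))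

lemma gsum_sub_int (ξ : ℝ) (z : ℂ) (m : ℤ) : gsum ξ (z - (m:ℂ)) = gsum ξ z := by
  unfold gsum
  rw [← (Equiv.addRight m).tsum_eq (fun n : ℤ => Complex.exp (-(Real.pi:ℂ) * (z - (n:ℂ))^2 / (ξ:ℂ)))]
  refine tsum_congr fun n => ?_
  congr 2
  push_cast [Equiv.coe_addRight]
  ring


lemma geo_int_hasSum_ite {q : ℝ} (h0 : 0 ≤ q) (h1 : q < 1) :
    HasSum (fun n : ℤ => if n = 0 then (0:ℝ) else q ^ n.natAbs) (2 * (q / (1 - q))) := by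
  have hnat : HasSum (fun n : ℕ => if ((n:ℤ)) = 0 then (0:ℝ) else q ^ ((n:ℤ)).natAbs)
      ((1 - q)⁻¹ - 1) := by
    have h := (hasSum_geometric_of_lt_one h0 h1).sub (hasSum_ite_eq (0:ℕ) (1:ℝ))
    convert h using 1
    · rfl
    funext n
    rcases Nat.eq_zero_or_pos n with hn | hn
    · subst hn; simp
    · have h2 : (n:ℤ) ≠ 0 := by exact_mod_cast hn.ne'
      simp [h2, hn.ne', Int.natAbs_natCast]
  have hneg : HasSum (fun n : ℕ => if (-((n:ℤ) + 1)) = 0 then (0:ℝ)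
      else q ^ (-((n:ℤ) + 1)).natAbs) (q * (1 - q)⁻¹) := by
    have h := (hasSum_geometric_of_lt_one h0 h1).mul_left q
    convert h using 1
    · rfl
    funext n
    have h2 : (-((n:ℤ) + 1)) ≠ 0 := by omega
    have h3 : (-((n:ℤ) + 1)).natAbs = n + 1 := by omega
    simp only [h2, if_false, h3, pow_succ]
    ring
  have h := HasSum.of_nat_of_neg_add_one
    (f := fun n : ℤ => if n = 0 then (0:ℝ) else q ^ n.natAbs) hnat hneg
  convert h using 1
  have h4 : (1:ℝ) - q ≠ 0 := by linarith
  field_simp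
  ring


lemma geo_int_summable {q : ℝ} (h0 : 0 ≤ q) (h1 : q < 1) :
    Summable (fun n : ℤ => q ^ n.natAbs) := by
  apply Summable.of_nat_of_neg
  · apply (summable_geometric_of_lt_one h0 h1).congr
    intro n; simp
  · apply (summable_geometric_of_lt_one h0 h1).congr
    intro n; simp


lemma gsum_est {ξ δ : ℝ} (hξ : 0 < ξ) (hδ : 0 < δ) (z : ℂ)
    (hx : |z.re| ≤ 1/2 - δ) (hq : Real.exp (-(2*Real.pi*δ)/ξ) ≤ 1/8) :
    gsum ξ z ≠ 0 ∧
    |Real.log (Norm.norm (gsum ξ z)) - (-Real.pi*z.re^2/ξ + Real.pi*z.im^2/ξ)| ≤ Real.log 2 := by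
  set q : ℝ := Real.exp (-(2*Real.pi*δ)/ξ) with hqdef
  have hq0 : 0 < q := Real.exp_pos _
  have hq1 : q < 1 := lt_of_le_of_lt hq (by norm_num)
  set f : ℤ → ℂ := fun n => Complex.exp (-(Real.pi:ℂ) * (z - (n:ℂ))^2 / (ξ:ℂ)) with hfdef
  have hnorm : ∀ n : ℤ, ‖f n‖ = Real.exp (-Real.pi*((z.re - n)^2 - z.im^2)/ξ) := by
    intro n
    have h1 : -(Real.pi:ℂ) * (z - (n:ℂ))^2 / (ξ:ℂ) = ((-Real.pi/ξ : ℝ) : ℂ) * (z - (n:ℂ))^2 := by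
      push_cast; ring
    rw [hfdef]
    simp only [h1, Complex.norm_exp]
    have h2 : ((z - (n:ℂ))^2).re = (z.re - n)^2 - z.im^2 := by
      simp only [pow_two, Complex.mul_re, Complex.sub_re, Complex.sub_im,
        Complex.intCast_re, Complex.intCast_im]
      ring
    rw [Complex.re_ofReal_mul, h2]
    congr 1
    ring
  have hT : ‖f 0‖ = Real.exp (-Real.pi*(z.re^2 - z.im^2)/ξ) := by
    rw [hnorm 0]; norm_num
  have hTpos : 0 < ‖f 0‖ := by rw [hT]; exact Real.exp_pos _
  have hfb : ∀ n : ℤ, ‖f n‖ ≤ ‖f 0‖ * q ^ n.natAbs := by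
    intro n
    rw [hnorm n, hT]
    have key : (z.re - n)^2 - z.re^2 ≥ 2*δ*(n.natAbs : ℝ) := by
      rcases eq_or_ne n 0 with h | h
      · subst h; simp
      · have h1 : (1:ℝ) ≤ |(n:ℝ)| := by
          rw [← Int.cast_abs]; exact_mod_cast Int.one_le_abs (by exact_mod_cast h)
        have h2 : ((n:ℝ))*z.re ≤ |(n:ℝ)| * |z.re| := by
          calc ((n:ℝ))*z.re ≤ |((n:ℝ))*z.re| := le_abs_self _
          _ = |(n:ℝ)| * |z.re| := abs_mul _ _
        have h3 : ((n.natAbs : ℝ)) = |(n:ℝ)| := by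
          rw [Nat.cast_natAbs]; exact_mod_cast rfl
        have h5 : 0 ≤ |(n:ℝ)| := abs_nonneg _
        have h6 : 0 ≤ |z.re| := abs_nonneg _
        rw [h3]
        nlinarith [mul_le_mul_of_nonneg_left hx h5, mul_nonneg (sub_nonneg.mpr h1) h5,
          _root_.sq_abs ((n:ℝ)), h2]
    have e3 : -Real.pi*((z.re - n)^2 - z.im^2)/ξ
        ≤ (-Real.pi*(z.re^2 - z.im^2) + -(2*Real.pi*δ)*(n.natAbs:ℝ))/ξ := by
      rw [div_le_div_iff₀ hξ hξ]
      have hπ : 0 < Real.pi := Real.pi_pos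
      nlinarith [mul_le_mul_of_nonneg_right (mul_le_mul_of_nonneg_left key hπ.le) hξ.le]
    calc Real.exp (-Real.pi*((z.re - n)^2 - z.im^2)/ξ)
        ≤ Real.exp ((-Real.pi*(z.re^2 - z.im^2) + -(2*Real.pi*δ)*(n.natAbs:ℝ))/ξ) :=
          Real.exp_le_exp.mpr e3
      _ = Real.exp (-Real.pi*(z.re^2 - z.im^2)/ξ) * Real.exp ((n.natAbs:ℝ) * (-(2*Real.pi*δ)/ξ)) := by
          rw [← Real.exp_add]; congr 1; ring
      _ = Real.exp (-Real.pi*(z.re^2 - z.im^2)/ξ) * q ^ n.natAbs := by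
          rw [hqdef, ← Real.exp_nat_mul]
  have hsumf : Summable f :=
    Summable.of_norm_bounded ((geo_int_summable hq0.le hq1).mul_left ‖f 0‖) hfb
  have hgs : gsum ξ z = ∑' n, f n := rfl
  have hsplit : ∑' n, f n = f 0 + ∑' n : ℤ, if n = 0 then 0 else f n :=
    Summable.tsum_eq_add_tsum_ite hsumf 0
  have htail : ‖∑' n : ℤ, if n = 0 then (0:ℂ) else f n‖ ≤ ‖f 0‖ * (2 * (q/(1-q))) := by
    have hb : HasSum (fun n : ℤ => if n = 0 then (0:ℝ) else ‖f 0‖ * q ^ n.natAbs)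
        (‖f 0‖ * (2 * (q/(1-q)))) := by
      have h := (geo_int_hasSum_ite hq0.le hq1).mul_left ‖f 0‖
      convert h using 1
      · rfl
      funext n
      by_cases h2 : n = 0 <;> simp [h2]
    refine tsum_of_norm_bounded hb fun n => ?_
    by_cases h2 : n = 0
    · simp [h2]
    · simp only [h2, if_false]
      exact hfb n
  have hqb : 2 * (q/(1-q)) ≤ 1/2 := by
    rw [mul_div_assoc'] at *
    rw [div_le_iff₀ (by linarith : (0:ℝ) < 1 - q)]
    linarith
  have hdist : ‖gsum ξ z - f 0‖ ≤ (1/2) * ‖f 0‖ := by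
    rw [hgs, hsplit]
    simp only [add_sub_cancel_left]
    calc ‖∑' n : ℤ, if n = 0 then (0:ℂ) else f n‖ ≤ ‖f 0‖ * (2 * (q/(1-q))) := htail
      _ ≤ ‖f 0‖ * (1/2) := mul_le_mul_of_nonneg_left hqb hTpos.le
      _ = (1/2) * ‖f 0‖ := by ring
  have hlow : (1/2) * ‖f 0‖ ≤ ‖gsum ξ z‖ := by
    have h1 := norm_sub_norm_le (f 0) (gsum ξ z)
    have h2 : ‖f 0 - gsum ξ z‖ = ‖gsum ξ z - f 0‖ := norm_sub_rev _ _
    linarith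
  have hup : ‖gsum ξ z‖ ≤ 2 * ‖f 0‖ := by
    have h1 := norm_sub_norm_le (gsum ξ z) (f 0)
    linarith
  have hgne : gsum ξ z ≠ 0 := by
    intro h
    rw [h, norm_zero] at hlow
    linarith
  refine ⟨hgne, ?_⟩
  have hgpos : 0 < ‖gsum ξ z‖ := by linarith
  have hlogT : Real.log ‖f 0‖ = -Real.pi*z.re^2/ξ + Real.pi*z.im^2/ξ := by
    rw [hT, Real.log_exp]; ring
  have l1 : Real.log ‖gsum ξ z‖ ≤ Real.log 2 + Real.log ‖f 0‖ := by
    calc Real.log ‖gsum ξ z‖ ≤ Real.log (2 * ‖f 0‖) := Real.log_le_log hgpos hup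
      _ = Real.log 2 + Real.log ‖f 0‖ := Real.log_mul two_ne_zero hTpos.ne'
  have l2 : Real.log ‖f 0‖ ≤ Real.log 2 + Real.log ‖gsum ξ z‖ := by
    have h3 : ‖f 0‖ ≤ 2 * ‖gsum ξ z‖ := by linarith
    calc Real.log ‖f 0‖ ≤ Real.log (2 * ‖gsum ξ z‖) := Real.log_le_log hTpos h3
      _ = Real.log 2 + Real.log ‖gsum ξ z‖ := Real.log_mul two_ne_zero hgpos.ne'
  rw [← hlogT, abs_le]
  constructor <;> linarith

lemma theta_eq_jacobi (k : ℤ) (z τ : ℂ) :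
    theta k z τ = Complex.exp ((Real.pi:ℂ) * I * ((k:ℂ)/3 - 1/6)^2 * (3*τ)
        + 2 * (Real.pi:ℂ) * I * ((k:ℂ)/3 - 1/6) * (3*z + 3/2)) *
      jacobiTheta₂ (((k:ℂ)/3 - 1/6) * (3*τ) + (3*z + 3/2)) (3*τ) := by
  rw [theta, jacobiTheta₂, ← tsum_mul_left]
  refine tsum_congr fun n => ?_
  rw [jacobiTheta₂_term, ← Complex.exp_add, ← Complex.exp_add]
  congr 1
  ring

lemma jacobiTheta₂_one_add (z σ : ℂ) : jacobiTheta₂ z (1 + σ) = jacobiTheta₂ (z + 1/2) σ := by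
  rw [jacobiTheta₂, jacobiTheta₂]
  refine tsum_congr fun n => ?_
  rw [jacobiTheta₂_term, jacobiTheta₂_term, Complex.exp_eq_exp_iff_exists_int]
  refine ⟨(n^2 - n)/2, ?_⟩
  have hev : Even (n^2 - n) := by
    have h := Int.even_mul_succ_self (n-1)
    rw [show (n-1)*((n-1)+1) = n^2 - n by ring] at h
    exact h
  have h2 : ((n^2 - n)/2 : ℤ) * 2 = n^2 - n := Int.ediv_mul_cancel hev.two_dvd
  have hm : (((n^2 - n)/2 : ℤ) : ℂ) * 2 = (n:ℂ)^2 - n := by exact_mod_cast congrArg Int.cast h2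
  linear_combination (-(Real.pi:ℂ) * I) * hm

lemma exp_mul_jacobi_eq_gsum (ξ : ℝ) (hξ : ξ ≠ 0) (z : ℂ) :
    Complex.exp (-(Real.pi:ℂ) * I * z^2 / (I*(ξ:ℂ))) * jacobiTheta₂ (z/(I*(ξ:ℂ))) (-1/(I*(ξ:ℂ)))
      = gsum ξ z := by
  rw [jacobiTheta₂, gsum, ← tsum_mul_left]
  refine tsum_congr fun n => ?_
  rw [jacobiTheta₂_term, ← Complex.exp_add]
  congr 1
  have hI : (I*(ξ:ℂ)) ≠ 0 := mul_ne_zero I_ne_zero (by exact_mod_cast hξ)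
  have hξ' : (ξ:ℂ) ≠ 0 := by exact_mod_cast hξ
  field_simp
  ring_nf

noncomputable def Cfac (K ε a : ℝ) : ℂ :=
  Complex.exp (-(Real.pi:ℂ) * I * (3*(-(a:ℂ)*tauE K ε) + 3/2)^2 / (3*tauE K ε))
    * (1 / (-I * (3*tauE K ε)) ^ ((1:ℂ)/2))
    * (1 / (-I * (I*((xi K ε : ℝ):ℂ))) ^ ((1:ℂ)/2))

lemma hD_ne (K ε : ℝ) (hK : 0 < K) (hε : 0 < ε) :
    (9*(K:ℂ) + 2*(Real.pi:ℂ)*I*(ε:ℂ)) ≠ 0 := by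
  intro h
  have h2 := congrArg Complex.re h
  simp [Complex.add_re, Complex.mul_re, Complex.mul_im] at h2
  nlinarith

lemma tau3_eq (K ε : ℝ) : (3:ℂ) * tauE K ε = -9*(K:ℂ) / (9*(K:ℂ) + 2*(Real.pi:ℂ)*I*(ε:ℂ)) := by
  rw [tauE]; push_cast; ring

lemma tau3_ne (K ε : ℝ) (hK : 0 < K) (hε : 0 < ε) : (3:ℂ) * tauE K ε ≠ 0 := by
  rw [tau3_eq]
  apply div_ne_zero _ (hD_ne K ε hK hε)
  intro h
  have h2 := congrArg Complex.re h
  simp at h2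
  nlinarith

lemma xi_c (K ε : ℝ) (hK : 0 < K) :
    ((xi K ε : ℝ):ℂ) = 2*(Real.pi:ℂ)*(ε:ℂ)/(9*(K:ℂ)) := by
  rw [xi]; push_cast; ring

lemma Cfac_ne (K ε a : ℝ) (hK : 0 < K) (hε : 0 < ε) : Cfac K ε a ≠ 0 := by
  have hπ := Real.pi_pos
  have hξpos : 0 < xi K ε := by rw [xi]; positivity
  apply mul_ne_zero (mul_ne_zero (Complex.exp_ne_zero _) _)
  · rw [one_div]
    apply inv_ne_zero
    intro h
    rw [Complex.cpow_eq_zero_iff] at h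
    have h2 : -I * (I*((xi K ε : ℝ):ℂ)) = ((xi K ε : ℝ):ℂ) := by
      rw [show -I * (I*((xi K ε : ℝ):ℂ)) = -(I*I)*((xi K ε : ℝ):ℂ) by ring, I_mul_I]
      ring
    rw [h2] at h
    exact (Complex.ofReal_ne_zero.mpr hξpos.ne') h.1
  · rw [one_div]
    apply inv_ne_zero
    intro h
    rw [Complex.cpow_eq_zero_iff] at h
    exact mul_ne_zero (neg_ne_zero.mpr I_ne_zero) (tau3_ne K ε hK hε) h.1

lemma theta_factor (K ε : ℝ) (hK : 0 < K) (hε : 0 < ε) (a : ℝ) (k : ℤ) :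
    theta k (-(a : ℂ) * tauE K ε) (tauE K ε)
      = Cfac K ε a * gsum (xi K ε) ((k:ℂ)/3 - 1/6 - (a:ℂ) - 1 - 3/2*I*(xi K ε)) := by
  have hπ := Real.pi_pos
  have hξpos : 0 < xi K ε := by rw [xi]; positivity
  have hτ' : (3:ℂ) * tauE K ε ≠ 0 := tau3_ne K ε hK hε
  have hD := hD_ne K ε hK hε
  have hK' : (K:ℂ) ≠ 0 := Complex.ofReal_ne_zero.mpr hK.ne'
  have hinv : -1/((3:ℂ)*tauE K ε) = 1 + I*((xi K ε : ℝ):ℂ) := by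
    rw [tau3_eq, xi_c K ε hK]
    field_simp
  have hmul : (1 + I*((xi K ε : ℝ):ℂ)) * ((3:ℂ)*tauE K ε) = -1 := by
    rw [← hinv]
    exact div_mul_cancel₀ (-1) hτ'
  rw [theta_eq_jacobi]
  rw [jacobiTheta₂_functional_equation (((k:ℂ)/3 - 1/6) * (3*tauE K ε) + (3*(-(a:ℂ)*tauE K ε) + 3/2)) (3*tauE K ε)]
  have hz2 : (((k:ℂ)/3 - 1/6) * (3*tauE K ε) + (3*(-(a:ℂ)*tauE K ε) + 3/2)) / (3*tauE K ε)
      = ((k:ℂ)/3 - 1/6 - (a:ℂ) - 3/2 - 3/2*I*(xi K ε)) := by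
    rw [div_eq_iff hτ']
    linear_combination ((3:ℂ)/2) * hmul
  rw [hz2, hinv, jacobiTheta₂_one_add]
  rw [show ((k:ℂ)/3 - 1/6 - (a:ℂ) - 3/2 - 3/2*I*(xi K ε)) + 1/2
      = ((k:ℂ)/3 - 1/6 - (a:ℂ) - 1 - 3/2*I*(xi K ε)) by ring]
  rw [jacobiTheta₂_functional_equation ((k:ℂ)/3 - 1/6 - (a:ℂ) - 1 - 3/2*I*(xi K ε)) (I*(xi K ε))]
  rw [mul_assoc (1 / (-I * (I*((xi K ε : ℝ):ℂ))) ^ ((1:ℂ)/2))]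
  rw [exp_mul_jacobi_eq_gsum (xi K ε) hξpos.ne' ((k:ℂ)/3 - 1/6 - (a:ℂ) - 1 - 3/2*I*(xi K ε))]
  rw [Cfac]
  have hsc : Complex.exp ((Real.pi:ℂ) * I * ((k:ℂ)/3 - 1/6)^2 * (3*tauE K ε)
        + 2 * (Real.pi:ℂ) * I * ((k:ℂ)/3 - 1/6) * (3*(-(a:ℂ)*tauE K ε) + 3/2))
      * Complex.exp (-(Real.pi:ℂ) * I * (((k:ℂ)/3 - 1/6) * (3*tauE K ε) + (3*(-(a:ℂ)*tauE K ε) + 3/2))^2 / (3*tauE K ε))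
      = Complex.exp (-(Real.pi:ℂ) * I * (3*(-(a:ℂ)*tauE K ε) + 3/2)^2 / (3*tauE K ε)) := by
    rw [← Complex.exp_add]
    congr 1
    field_simp [right_ne_zero_of_mul hτ']
    ring
  rw [← hsc]
  ring

lemma fract_neg_half_sq (y : ℝ) : (Int.fract (-y) - 1/2)^2 = (Int.fract y - 1/2)^2 := by
  rcases eq_or_ne (Int.fract y) 0 with h | h
  · rw [Int.fract_neg_eq_zero.mpr h, h]
  · rw [Int.fract_neg h]; ring

lemma frbd {y δ : ℝ} (m : ℤ) (hδ : 0 < δ) (h1 : δ ≤ y + m) (h2 : y + m ≤ 1 - δ) :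
    δ ≤ Int.fract y ∧ Int.fract y ≤ 1 - δ := by
  have h3 : Int.fract (y + m) = y + m := Int.fract_eq_self.mpr ⟨by linarith, by linarith⟩
  have h4 : Int.fract y = y + m := by rw [← Int.fract_add_intCast y m, h3]
  rw [h4]
  exact ⟨h1, h2⟩

lemma fract_bounds {δ : ℝ} (hδ0 : 0 < δ) (hδ6 : δ < 1/6) {a : ℝ} (ha : a ∈ Rdelta δ)
    (k : ℤ) (hk : k = 0 ∨ k = 1 ∨ k = 2) :
    δ ≤ Int.fract ((k:ℝ)/3 - a - 2/3) ∧ Int.fract ((k:ℝ)/3 - a - 2/3) ≤ 1 - δ := by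
  rcases ha with (⟨ha1, ha2⟩ | ⟨ha1, ha2⟩) | ⟨ha1, ha2⟩ <;>
    rcases hk with hk | hk | hk <;> subst hk <;> push_cast
  · exact frbd 1 hδ0 (by norm_num; linarith) (by norm_num; linarith)
  · exact frbd 1 hδ0 (by norm_num; linarith) (by norm_num; linarith)
  · exact frbd 1 hδ0 (by norm_num; linarith) (by norm_num; linarith)
  · exact frbd 2 hδ0 (by norm_num; linarith) (by norm_num; linarith)
  · exact frbd 1 hδ0 (by norm_num; linarith) (by norm_num; linarith)
  · exact frbd 1 hδ0 (by norm_num; linarith) (by norm_num; linarith)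
  · exact frbd 2 hδ0 (by norm_num; linarith) (by norm_num; linarith)
  · exact frbd 2 hδ0 (by norm_num; linarith) (by norm_num; linarith)
  · exact frbd 1 hδ0 (by norm_num; linarith) (by norm_num; linarith)

lemma ctilde_eq (K a : ℝ) (hK : 0 < K) :
    ctilde K (3*K*a) = 9*K/2 * ((Int.fract ((2:ℝ)/3 - a - 2/3) - 1/2)^2
      - (Int.fract ((0:ℝ)/3 - a - 2/3) - 1/2)^2) := by
  have hK' : K ≠ 0 := hK.ne'
  rw [ctilde, show (3*K*a - K)/(3*K) = a - 1/3 by field_simp,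
    show 3*K*a/(3*K) = a by field_simp]
  rw [show (2:ℝ)/3 - a - 2/3 = -a by ring, show (0:ℝ)/3 - a - 2/3 = -(a - 1/3) - 1 by ring]
  rw [show -(a - 1/3) - 1 = -(a-1/3) + (-1 : ℤ) by push_cast; ring, Int.fract_add_intCast]
  rw [fract_neg_half_sq, fract_neg_half_sq]
  ring

lemma stilde_eq (K a : ℝ) (hK : 0 < K) :
    stilde K (3*K*a) = 9*K/2 * ((Int.fract ((2:ℝ)/3 - a - 2/3) - 1/2)^2
      - (Int.fract ((1:ℝ)/3 - a - 2/3) - 1/2)^2) := by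
  have hK' : K ≠ 0 := hK.ne'
  rw [stilde, show (3*K*a - 2*K)/(3*K) = a - 2/3 by field_simp,
    show 3*K*a/(3*K) = a by field_simp]
  rw [show (2:ℝ)/3 - a - 2/3 = -a by ring, show (1:ℝ)/3 - a - 2/3 = -(a - 2/3) - 1 by ring]
  rw [show -(a - 2/3) - 1 = -(a-2/3) + (-1 : ℤ) by push_cast; ring, Int.fract_add_intCast]
  rw [fract_neg_half_sq, fract_neg_half_sq]
  ring

lemma key_s13 (K δ ε a : ℝ) (k : ℤ) (hK : 0 < K) (hδ0 : 0 < δ) (hε : 0 < ε)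
    (hsmall : Real.exp (-(2*Real.pi*δ)/(xi K ε)) ≤ 1/8)
    (hfr : δ ≤ Int.fract ((k:ℝ)/3 - a - 2/3) ∧ Int.fract ((k:ℝ)/3 - a - 2/3) ≤ 1 - δ) :
    theta k (-(a : ℂ) * tauE K ε) (tauE K ε) ≠ 0 ∧
    |Real.log (Norm.norm (theta k (-(a : ℂ) * tauE K ε) (tauE K ε)))
       - Real.log (Norm.norm (Cfac K ε a))
       - (-Real.pi * (Int.fract ((k:ℝ)/3 - a - 2/3) - 1/2)^2 / (xi K ε)
          + Real.pi * (3/2 * xi K ε)^2 / (xi K ε))| ≤ Real.log 2 := by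
  have hπ := Real.pi_pos
  have hξpos : 0 < xi K ε := by rw [xi]; positivity
  set ξ := xi K ε with hξdef
  set y : ℝ := (k:ℝ)/3 - a - 2/3 with hydef
  set r : ℝ := Int.fract y - 1/2 with hrdef
  set n₀ : ℤ := ⌊y⌋ with hn₀def
  have hr : |r| ≤ 1/2 - δ := abs_le.mpr ⟨by rw [hrdef]; linarith [hfr.1], by rw [hrdef]; linarith [hfr.2]⟩
  set z₃ : ℂ := (k:ℂ)/3 - 1/6 - (a:ℂ) - 1 - 3/2*I*(ξ:ℂ) with hz₃def
  have hz : z₃ - (n₀:ℂ) = ((r : ℝ):ℂ) + ((-(3/2)*ξ : ℝ):ℂ)*I := by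
    rw [hz₃def, hrdef, hydef, Int.fract]
    push_cast
    ring
  have hre : (z₃ - (n₀:ℂ)).re = r := by rw [hz]; simp
  have him : (z₃ - (n₀:ℂ)).im = -(3/2)*ξ := by rw [hz]; simp
  have hest := gsum_est hξpos hδ0 (z₃ - (n₀:ℂ)) (by rw [hre]; exact hr) hsmall
  have hshift : gsum ξ z₃ = gsum ξ (z₃ - (n₀:ℂ)) := (gsum_sub_int ξ z₃ n₀).symm
  have hfac := theta_factor K ε hK hε a k
  have hgne : gsum ξ z₃ ≠ 0 := by rw [hshift]; exact hest.1
  have hthne : theta k (-(a : ℂ) * tauE K ε) (tauE K ε) ≠ 0 := by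
    rw [hfac]
    exact mul_ne_zero (Cfac_ne K ε a hK hε) hgne
  refine ⟨hthne, ?_⟩
  have hlog : Real.log (Norm.norm (theta k (-(a : ℂ) * tauE K ε) (tauE K ε)))
      = Real.log (Norm.norm (Cfac K ε a)) + Real.log (Norm.norm (gsum ξ (z₃ - (n₀:ℂ)))) := by
    rw [hfac, norm_mul, Real.log_mul, hshift]
    · exact norm_ne_zero_iff.mpr (Cfac_ne K ε a hK hε)
    · exact norm_ne_zero_iff.mpr hgne
  rw [hlog]
  have h2 := hest.2
  rw [hre, him] at h2
  have h3 : -Real.pi * r^2/ξ + Real.pi * (-(3/2)*ξ)^2/ξ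
      = -Real.pi * r^2 / ξ + Real.pi * (3/2 * ξ)^2/ξ := by ring
  rw [h3] at h2
  convert h2 using 2
  ring

/-- Ultradiscretization of the elliptic functions `c` and `s`: uniform convergence
on `R_δ` of `ε log|θ₀/θ₂|` and `ε log|θ₁/θ₂|` to `c̃(3Ka)` and `s̃(3Ka)` as `ε → 0⁺`. -/
theorem ultradiscrete_limit_of_ratios (K δ : ℝ) (hK : 0 < K) (hδ : δ ∈ Set.Ioo 0 (1 / 6)) :
    (∀ᶠ ε in nhdsWithin 0 (Set.Ioi (0 : ℝ)), ∀ a ∈ Rdelta δ, ∀ k ∈ ({0, 1, 2} : Set ℤ),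
      theta k (-(a : ℂ) * tauE K ε) (tauE K ε) ≠ 0) ∧
    TendstoUniformlyOn
      (fun (ε : ℝ) (a : ℝ) => ε * Real.log (Norm.norm
        (theta 0 (-(a : ℂ) * tauE K ε) (tauE K ε) / theta 2 (-(a : ℂ) * tauE K ε) (tauE K ε))))
      (fun (a : ℝ) => ctilde K (3 * K * a)) (nhdsWithin 0 (Set.Ioi (0 : ℝ))) (Rdelta δ) ∧
    TendstoUniformlyOn
      (fun (ε : ℝ) (a : ℝ) => ε * Real.log (Norm.norm
        (theta 1 (-(a : ℂ) * tauE K ε) (tauE K ε) / theta 2 (-(a : ℂ) * tauE K ε) (tauE K ε))))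
      (fun (a : ℝ) => stilde K (3 * K * a)) (nhdsWithin 0 (Set.Ioi (0 : ℝ))) (Rdelta δ) := by
  obtain ⟨hδ0, hδ6'⟩ := hδ
  have hπ := Real.pi_pos
  have hlog2 : 0 < Real.log 2 := Real.log_pos (by norm_num)
  have hε₁pos : 0 < 3*K*δ := by positivity
  have hsmall : ∀ ε : ℝ, 0 < ε → ε ≤ 3*K*δ → Real.exp (-(2*Real.pi*δ)/(xi K ε)) ≤ 1/8 := by
    intro ε hε hε'
    have hξ : xi K ε = 2*Real.pi*ε/(9*K) := rfl
    have heq : -(2*Real.pi*δ)/(xi K ε) = -(9*K*δ/ε) := by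
      rw [hξ]; field_simp
    rw [heq]
    have h1 : (3:ℝ) ≤ 9*K*δ/ε := by
      rw [le_div_iff₀ hε]; nlinarith
    have h2 : Real.exp (-(9*K*δ/ε)) ≤ Real.exp (-3) := Real.exp_le_exp.mpr (by linarith)
    have h3 : Real.exp (-3) ≤ 1/8 := by
      have h4 : Real.exp 3 = (Real.exp 1)^(3:ℕ) := by
        rw [← Real.exp_nat_mul]; norm_num
      have he : (2.7182818283:ℝ) < Real.exp 1 := Real.exp_one_gt_d9
      have h5 : (8:ℝ) < Real.exp 3 := by
        rw [h4]
        calc (8:ℝ) < (2.7182818283:ℝ)^(3:ℕ) := by norm_num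
          _ < (Real.exp 1)^(3:ℕ) := by
              apply pow_lt_pow_left₀ he (by norm_num) (by norm_num)
      rw [Real.exp_neg]
      rw [show (1:ℝ)/8 = 8⁻¹ by norm_num]
      exact inv_anti₀ (by norm_num) h5.le
    linarith
  -- the three k-values
  have hk0 : (0:ℤ) = 0 ∨ (0:ℤ) = 1 ∨ (0:ℤ) = 2 := by norm_num
  have hk1 : (1:ℤ) = 0 ∨ (1:ℤ) = 1 ∨ (1:ℤ) = 2 := by norm_num
  have hk2 : (2:ℤ) = 0 ∨ (2:ℤ) = 1 ∨ (2:ℤ) = 2 := by norm_num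
  refine ⟨?_, ?_, ?_⟩
  · filter_upwards [Ioc_mem_nhdsGT_of_mem (Set.mem_Ico.mpr ⟨le_refl 0, hε₁pos⟩)] with ε hε
    intro a ha k hk
    have hk' : k = 0 ∨ k = 1 ∨ k = 2 := by simpa using hk
    exact (key_s13 K δ ε a k hK hδ0 hε.1 (hsmall ε hε.1 hε.2) (fract_bounds hδ0 hδ6' ha k hk')).1
  · rw [Metric.tendstoUniformlyOn_iff]
    intro η hη
    have hε₂pos : 0 < min (3*K*δ) (η/(4*Real.log 2)) := lt_min hε₁pos (by positivity)
    filter_upwards [Ioc_mem_nhdsGT_of_mem (Set.mem_Ico.mpr ⟨le_refl 0, hε₂pos⟩)] with ε hε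
    intro a ha
    obtain ⟨hεpos, hεle⟩ := hε
    have hεle1 : ε ≤ 3*K*δ := le_trans hεle (min_le_left _ _)
    have hεle2 : ε ≤ η/(4*Real.log 2) := le_trans hεle (min_le_right _ _)
    have hsm := hsmall ε hεpos hεle1
    have h0 := key_s13 K δ ε a 0 hK hδ0 hεpos hsm (fract_bounds hδ0 hδ6' ha 0 hk0)
    have h2 := key_s13 K δ ε a 2 hK hδ0 hεpos hsm (fract_bounds hδ0 hδ6' ha 2 hk2)
    have hξpos : 0 < xi K ε := by rw [xi]; positivity
    set ξ := xi K ε with hξdef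
    -- notation
    set T0 := theta 0 (-(a : ℂ) * tauE K ε) (tauE K ε) with hT0def
    set T2 := theta 2 (-(a : ℂ) * tauE K ε) (tauE K ε) with hT2def
    have habs0 : Norm.norm T0 ≠ 0 := norm_ne_zero_iff.mpr h0.1
    have habs2 : Norm.norm T2 ≠ 0 := norm_ne_zero_iff.mpr h2.1
    have hlogq : Real.log (Norm.norm (T0 / T2))
        = Real.log (Norm.norm T0) - Real.log (Norm.norm T2) := by
      rw [norm_div, Real.log_div habs0 habs2]
    -- fract arguments
    have harg0 : ((0:ℤ):ℝ)/3 - a - 2/3 = (0:ℝ)/3 - a - 2/3 := by norm_num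
    have harg2 : ((2:ℤ):ℝ)/3 - a - 2/3 = (2:ℝ)/3 - a - 2/3 := by norm_num
    set r0 := Int.fract ((0:ℝ)/3 - a - 2/3) - 1/2 with hr0def
    set r2 := Int.fract ((2:ℝ)/3 - a - 2/3) - 1/2 with hr2def
    have e0b := h0.2
    have e2b := h2.2
    rw [harg0] at e0b
    rw [harg2] at e2b
    -- main exact computation
    have hctilde : ctilde K (3*K*a) = ε * ((-Real.pi * r0^2/ξ + Real.pi * (3/2*ξ)^2/ξ)
        - (-Real.pi * r2^2/ξ + Real.pi * (3/2*ξ)^2/ξ)) := by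
      rw [ctilde_eq K a hK, hr0def, hr2def]
      have hξne : ξ ≠ 0 := hξpos.ne'
      have hξeq : ξ = 2*Real.pi*ε/(9*K) := rfl
      rw [hξeq]
      field_simp [hξeq]
      ring
    rw [Real.dist_eq, hlogq]
    set L0 := -Real.pi * r0^2/ξ + Real.pi * (3/2*ξ)^2/ξ
    set L2 := -Real.pi * r2^2/ξ + Real.pi * (3/2*ξ)^2/ξ
    set lC := Real.log (Norm.norm (Cfac K ε a))
    have heq : ctilde K (3*K*a) - ε * (Real.log (Norm.norm T0) - Real.log (Norm.norm T2))
        = ε * (Real.log (Norm.norm T2) - lC - L2)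
          - ε * (Real.log (Norm.norm T0) - lC - L0) := by
      rw [hctilde]; ring
    rw [heq]
    have hb : |ε * (Real.log (Norm.norm T2) - lC - L2)
        - ε * (Real.log (Norm.norm T0) - lC - L0)|
        ≤ ε * Real.log 2 + ε * Real.log 2 := by
      calc |ε * (Real.log (Norm.norm T2) - lC - L2) - ε * (Real.log (Norm.norm T0) - lC - L0)|
          ≤ |ε * (Real.log (Norm.norm T2) - lC - L2)| + |ε * (Real.log (Norm.norm T0) - lC - L0)| := abs_sub _ _
        _ = ε * |Real.log (Norm.norm T2) - lC - L2| + ε * |Real.log (Norm.norm T0) - lC - L0| := by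
            rw [abs_mul, abs_mul, abs_of_pos hεpos]
        _ ≤ ε * Real.log 2 + ε * Real.log 2 :=
            add_le_add (mul_le_mul_of_nonneg_left e2b hεpos.le)
              (mul_le_mul_of_nonneg_left e0b hεpos.le)
    have hfin : ε * Real.log 2 + ε * Real.log 2 < η := by
      have h6 : ε * (4 * Real.log 2) ≤ η := (le_div_iff₀ (by positivity)).mp hεle2
      have h7 : 0 ≤ ε * Real.log 2 := mul_nonneg hεpos.le hlog2.le
      linarith
    linarith [hb, hfin]
  · rw [Metric.tendstoUniformlyOn_iff]
    intro η hη
    have hε₂pos : 0 < min (3*K*δ) (η/(4*Real.log 2)) := lt_min hε₁pos (by positivity)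
    filter_upwards [Ioc_mem_nhdsGT_of_mem (Set.mem_Ico.mpr ⟨le_refl 0, hε₂pos⟩)] with ε hε
    intro a ha
    obtain ⟨hεpos, hεle⟩ := hε
    have hεle1 : ε ≤ 3*K*δ := le_trans hεle (min_le_left _ _)
    have hεle2 : ε ≤ η/(4*Real.log 2) := le_trans hεle (min_le_right _ _)
    have hsm := hsmall ε hεpos hεle1
    have h1 := key_s13 K δ ε a 1 hK hδ0 hεpos hsm (fract_bounds hδ0 hδ6' ha 1 hk1)
    have h2 := key_s13 K δ ε a 2 hK hδ0 hεpos hsm (fract_bounds hδ0 hδ6' ha 2 hk2)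
    have hξpos : 0 < xi K ε := by rw [xi]; positivity
    set ξ := xi K ε with hξdef
    -- notation
    set T1 := theta 1 (-(a : ℂ) * tauE K ε) (tauE K ε) with hT1def
    set T2 := theta 2 (-(a : ℂ) * tauE K ε) (tauE K ε) with hT2def
    have habs1 : Norm.norm T1 ≠ 0 := norm_ne_zero_iff.mpr h1.1
    have habs2 : Norm.norm T2 ≠ 0 := norm_ne_zero_iff.mpr h2.1
    have hlogq : Real.log (Norm.norm (T1 / T2))
        = Real.log (Norm.norm T1) - Real.log (Norm.norm T2) := by
      rw [norm_div, Real.log_div habs1 habs2]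
    -- fract arguments
    have harg1 : ((1:ℤ):ℝ)/3 - a - 2/3 = (1:ℝ)/3 - a - 2/3 := by norm_num
    have harg2 : ((2:ℤ):ℝ)/3 - a - 2/3 = (2:ℝ)/3 - a - 2/3 := by norm_num
    set r1 := Int.fract ((1:ℝ)/3 - a - 2/3) - 1/2 with hr1def
    set r2 := Int.fract ((2:ℝ)/3 - a - 2/3) - 1/2 with hr2def
    have e1b := h1.2
    have e2b := h2.2
    rw [harg1] at e1b
    rw [harg2] at e2b
    -- main exact computation
    have hctilde : stilde K (3*K*a) = ε * ((-Real.pi * r1^2/ξ + Real.pi * (3/2*ξ)^2/ξ)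
        - (-Real.pi * r2^2/ξ + Real.pi * (3/2*ξ)^2/ξ)) := by
      rw [stilde_eq K a hK, hr1def, hr2def]
      have hξne : ξ ≠ 0 := hξpos.ne'
      have hξeq : ξ = 2*Real.pi*ε/(9*K) := rfl
      rw [hξeq]
      field_simp [hξeq]
      ring
    rw [Real.dist_eq, hlogq]
    set L1 := -Real.pi * r1^2/ξ + Real.pi * (3/2*ξ)^2/ξ
    set L2 := -Real.pi * r2^2/ξ + Real.pi * (3/2*ξ)^2/ξ
    set lC := Real.log (Norm.norm (Cfac K ε a))
    have heq : stilde K (3*K*a) - ε * (Real.log (Norm.norm T1) - Real.log (Norm.norm T2))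
        = ε * (Real.log (Norm.norm T2) - lC - L2)
          - ε * (Real.log (Norm.norm T1) - lC - L1) := by
      rw [hctilde]; ring
    rw [heq]
    have hb : |ε * (Real.log (Norm.norm T2) - lC - L2)
        - ε * (Real.log (Norm.norm T1) - lC - L1)|
        ≤ ε * Real.log 2 + ε * Real.log 2 := by
      calc |ε * (Real.log (Norm.norm T2) - lC - L2) - ε * (Real.log (Norm.norm T1) - lC - L1)|
          ≤ |ε * (Real.log (Norm.norm T2) - lC - L2)| + |ε * (Real.log (Norm.norm T1) - lC - L1)| := abs_sub _ _
        _ = ε * |Real.log (Norm.norm T2) - lC - L2| + ε * |Real.log (Norm.norm T1) - lC - L1| := by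
            rw [abs_mul, abs_mul, abs_of_pos hεpos]
        _ ≤ ε * Real.log 2 + ε * Real.log 2 :=
            add_le_add (mul_le_mul_of_nonneg_left e2b hεpos.le)
              (mul_le_mul_of_nonneg_left e1b hεpos.le)
    have hfin : ε * Real.log 2 + ε * Real.log 2 < η := by
      have h6 : ε * (4 * Real.log 2) ≤ η := (le_div_iff₀ (by positivity)).mp hεle2
      have h7 : 0 ≤ ε * Real.log 2 := mul_nonneg hεpos.le hlog2.le
      linarith
    linarith [hb, hfin]
end
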